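/- In a finite polygamous (many-to-many) market with strict preferences, the man-optimal stable matching is woman-pessimal: if μ is a stable matching such that for every stable matching μ' and every man m the i-th best entry of the padded assignment μ(m) is weakly preferred by m to the i-th best entry of μ'(m) for all i ≤ q_m, then for every stable matching μ' and every woman w, the i-th best entry of μ'(w) is weakly preferred by w to the i-th best entry of μ(w) for all i ∈ {1, …, q_w}. -/

import Mathlib

/-- The assignment of man `m` in the matching `μ` of a polygamous market:
the multiset of his matched women (as `some w`), padded with copies of the
man himself (as `none`) up to his quota `qM m`. -/
def paddedAssignmentM {M W : Type*} [DecidableEq M]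
    (μ : Finset (M × W)) (qM : M → ℕ) (m : M) : Multiset (Option W) :=
  ((μ.filter fun p => p.1 = m).val.map fun p => some p.2) +
    Multiset.replicate (qM m - (μ.filter fun p => p.1 = m).card) none

/-- The assignment of woman `w` in the matching `μ`, padded with copies of
the woman herself (as `none`) up to her quota `qW w`. -/
def paddedAssignmentW {M W : Type*} [DecidableEq W]
    (μ : Finset (M × W)) (qW : W → ℕ) (w : W) : Multiset (Option M) :=
  ((μ.filter fun p => p.2 = w).val.map fun p => some p.1) +
    Multiset.replicate (qW w - (μ.filter fun p => p.2 = w).card) none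

/-- A valid matching on a polygamous market. -/
def PolyValid {M W : Type*} [DecidableEq M] [DecidableEq W]
    (qM : M → ℕ) (qW : W → ℕ) (μ : Finset (M × W)) : Prop :=
  (∀ m : M, (μ.filter fun p => p.1 = m).card ≤ qM m) ∧
  (∀ w : W, (μ.filter fun p => p.2 = w).card ≤ qW w)

/-- Stability of a valid matching on a polygamous market: individual
rationality plus the absence of blocking pairs. -/
def PolyStable {M W : Type*} [DecidableEq M] [DecidableEq W]
    (qM : M → ℕ) (qW : W → ℕ)
    (prefM : M → Option W → Option W → Prop)
    (prefW : W → Option M → Option M → Prop)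
    (μ : Finset (M × W)) : Prop :=
  (∀ p ∈ μ, prefM p.1 (some p.2) none ∧ prefW p.2 (some p.1) none) ∧
  ¬ ∃ (m : M) (w : W), (m, w) ∉ μ ∧
      ((∃ w', (m, w') ∈ μ ∧ prefM m (some w) (some w')) ∨
        ((μ.filter fun p => p.1 = m).card < qM m ∧ prefM m (some w) none)) ∧
      ((∃ m', (m', w) ∈ μ ∧ prefW w (some m) (some m')) ∨
        ((μ.filter fun p => p.2 = w).card < qW w ∧ prefW w (some m) none))

/-- `μ` dominates `μ'` from the men's point of view (entrywise comparison of
the padded assignments listed in decreasing order of preference). -/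
def MenDominate {M W : Type*} [DecidableEq M]
    (qM : M → ℕ) (prefM : M → Option W → Option W → Prop)
    (μ μ' : Finset (M × W)) : Prop :=
  ∀ (m : M) (l l' : List (Option W)),
    (l : Multiset (Option W)) = paddedAssignmentM μ qM m →
    l.Pairwise (fun a b => a = b ∨ prefM m a b) →
    (l' : Multiset (Option W)) = paddedAssignmentM μ' qM m →
    l'.Pairwise (fun a b => a = b ∨ prefM m a b) →
    ∀ (i : ℕ) (h : i < l.length) (h' : i < l'.length),
      l.get ⟨i, h⟩ = l'.get ⟨i, h'⟩ ∨ prefM m (l.get ⟨i, h⟩) (l'.get ⟨i, h'⟩)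

/-!
STATEMENT: in a finite polygamous market with strict preferences, a
man-optimal stable matching is woman-pessimal: every woman weakly prefers
(entrywise, on padded assignments listed in decreasing order of her
preference) any stable matching to the man-optimal one.
-/

lemma mem_paddedM_some {M W : Type*} [DecidableEq M] {μ : Finset (M × W)} {qM : M → ℕ}
    {m : M} {w : W} : some w ∈ paddedAssignmentM μ qM m ↔ (m, w) ∈ μ := by
  simp only [paddedAssignmentM, Multiset.mem_add, Multiset.mem_map, Multiset.mem_replicate]
  constructor
  · rintro (⟨p, hp, hpe⟩ | ⟨-, hfalse⟩)
    · rw [Finset.mem_val, Finset.mem_filter] at hp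
      obtain ⟨h1, h2⟩ := hp
      obtain rfl : p.2 = w := by injection hpe
      rwa [← h2, Prod.mk.eta]
    · exact absurd hfalse.symm (by simp)
  · intro hmem
    exact Or.inl ⟨(m, w), by simp [Finset.mem_filter, hmem], rfl⟩

lemma none_mem_paddedM {M W : Type*} [DecidableEq M] {μ : Finset (M × W)} {qM : M → ℕ}
    {m : M} (h : (none : Option W) ∈ paddedAssignmentM μ qM m) :
    (μ.filter fun p => p.1 = m).card < qM m := by
  simp only [paddedAssignmentM, Multiset.mem_add, Multiset.mem_map, Multiset.mem_replicate] at h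
  rcases h with ⟨p, -, hpe⟩ | ⟨h1, -⟩
  · exact absurd hpe (by simp)
  · omega

lemma card_paddedM {M W : Type*} [DecidableEq M] {μ : Finset (M × W)} {qM : M → ℕ}
    {m : M} (h : (μ.filter fun p => p.1 = m).card ≤ qM m) :
    Multiset.card (paddedAssignmentM μ qM m) = qM m := by
  simp only [paddedAssignmentM, Multiset.card_add, Multiset.card_map, Multiset.card_replicate]
  rw [Finset.card] at h ⊢
  omega

lemma mem_paddedW_some {M W : Type*} [DecidableEq W] {μ : Finset (M × W)} {qW : W → ℕ}
    {w : W} {m : M} : some m ∈ paddedAssignmentW μ qW w ↔ (m, w) ∈ μ := by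
  simp only [paddedAssignmentW, Multiset.mem_add, Multiset.mem_map, Multiset.mem_replicate]
  constructor
  · rintro (⟨p, hp, hpe⟩ | ⟨-, hfalse⟩)
    · rw [Finset.mem_val, Finset.mem_filter] at hp
      obtain ⟨h1, h2⟩ := hp
      obtain rfl : p.1 = m := by injection hpe
      rwa [← h2, Prod.mk.eta]
    · exact absurd hfalse.symm (by simp)
  · intro hmem
    exact Or.inl ⟨(m, w), by simp [Finset.mem_filter, hmem], rfl⟩

lemma none_mem_paddedW {M W : Type*} [DecidableEq W] {μ : Finset (M × W)} {qW : W → ℕ}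
    {w : W} (h : (none : Option M) ∈ paddedAssignmentW μ qW w) :
    (μ.filter fun p => p.2 = w).card < qW w := by
  simp only [paddedAssignmentW, Multiset.mem_add, Multiset.mem_map, Multiset.mem_replicate] at h
  rcases h with ⟨p, -, hpe⟩ | ⟨h1, -⟩
  · exact absurd hpe (by simp)
  · omega

lemma card_paddedW {M W : Type*} [DecidableEq W] {μ : Finset (M × W)} {qW : W → ℕ}
    {w : W} (h : (μ.filter fun p => p.2 = w).card ≤ qW w) :
    Multiset.card (paddedAssignmentW μ qW w) = qW w := by
  simp only [paddedAssignmentW, Multiset.card_add, Multiset.card_map, Multiset.card_replicate]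
  rw [Finset.card] at h ⊢
  omega

lemma count_paddedW_some {M W : Type*} [DecidableEq W] [DecidableEq M]
    {μ : Finset (M × W)} {qW : W → ℕ} {w : W} (m : M) :
    Multiset.count (some m) (paddedAssignmentW μ qW w) ≤ 1 := by
  have hnd : ((μ.filter fun p => p.2 = w).val.map fun p => some p.1).Nodup := by
    refine Multiset.Nodup.map_on ?_ (μ.filter fun p => p.2 = w).nodup
    intro p hp q hq he
    rw [Finset.mem_val, Finset.mem_filter] at hp hq
    have : p.1 = q.1 := by injection he
    exact Prod.ext this (hp.2.trans hq.2.symm)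
  rw [paddedAssignmentW, Multiset.count_add]
  have h1 := Multiset.nodup_iff_count_le_one.mp hnd (some m)
  have h2 : Multiset.count (some m) (Multiset.replicate (qW w - (μ.filter fun p => p.2 = w).card) (none : Option M)) = 0 := by
    rw [Multiset.count_replicate]
    simp
  omega

lemma sorted_pigeonhole {α : Type*} [DecidableEq α] {r : α → α → Prop}
    (htr : Transitive r) (hir : Irreflexive r)
    {l l' : List α}
    (hl : l.Pairwise fun a b => a = b ∨ r a b)
    (hl' : l'.Pairwise fun a b => a = b ∨ r a b)
    {i : ℕ} (h : i < l.length) (h' : i < l'.length)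
    (ht : r (l'.get ⟨i, h'⟩) (l.get ⟨i, h⟩))
    (hcount : ∀ x, r x (l.get ⟨i, h⟩) → Multiset.count x (l' : Multiset α) ≤ 1) :
    ∃ x, x ∈ l' ∧ x ∉ l ∧ (x = l'.get ⟨i, h'⟩ ∨ r x (l'.get ⟨i, h'⟩)) := by
  classical
  by_contra hc
  push_neg at hc
  set t := l'.get ⟨i, h'⟩ with hts
  set li := l.get ⟨i, h⟩ with hlis
  set p : α → Prop := fun x => x = t ∨ r x t with hp
  have hpl : ∀ x, p x → r x li := by
    rintro x (rfl | hx)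
    · exact ht
    · exact htr hx ht
  -- lower bound on l'
  have htake : ∀ x ∈ l'.take (i + 1), p x := by
    intro x hx
    obtain ⟨n, hn⟩ := List.mem_iff_get.mp hx
    have hlt : (n : ℕ) < i + 1 := by
      have := n.2
      simp only [List.length_take] at this
      omega
    have hg : (l'.take (i + 1)).get n = l'.get ⟨(n : ℕ), by omega⟩ := by
      simp [List.get_eq_getElem, List.getElem_take]
    rcases eq_or_lt_of_le (Nat.lt_succ_iff.mp hlt) with he | hlt'
    · left
      rw [← hn, hg, hts]
      congr 1
      exact Fin.ext he
    · have := hl'.rel_get_of_lt (a := ⟨(n : ℕ), by omega⟩) (b := ⟨i, h'⟩) hlt'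
      rw [← hn, hg]
      exact this
  have h1 : i + 1 ≤ Multiset.card (Multiset.filter p (l' : Multiset α)) := by
    have hsplit : (l' : Multiset α) = ↑(l'.take (i + 1)) + ↑(l'.drop (i + 1)) := by
      rw [Multiset.coe_add, List.take_append_drop]
    rw [hsplit, Multiset.filter_add, Multiset.card_add,
      Multiset.filter_eq_self.mpr (by simpa using htake)]
    have hlen : (l'.take (i + 1)).length = i + 1 := by
      rw [List.length_take]; omega
    rw [Multiset.coe_card, hlen]
    omega
  -- upper bound on l
  have hdrop : ∀ x ∈ l.drop i, ¬ p x := by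
    intro x hx hpx
    obtain ⟨n, hn⟩ := List.mem_iff_get.mp hx
    have hn2 : (n : ℕ) < l.length - i := by have := n.2; simpa using this
    have hg : (l.drop i).get n = l.get ⟨i + (n : ℕ), by omega⟩ := by
      simp [List.get_eq_getElem, List.getElem_drop]
    have hrel : li = x ∨ r li x := by
      rcases Nat.eq_zero_or_pos (n : ℕ) with hz | hpos
      · left; rw [← hn, hg, hlis]; congr 1; exact Fin.ext (by simp [hz])
      · have := hl.rel_get_of_lt (a := ⟨i, h⟩) (b := ⟨i + (n : ℕ), by omega⟩)
          (by simp only [Fin.mk_lt_mk]; omega)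
        rw [← hn, hg]; exact this
    have hxli := hpl x hpx
    rcases hrel with rfl | hr
    · exact hir _ hxli
    · exact hir _ (htr hxli hr)
  have h2 : Multiset.card (Multiset.filter p (l : Multiset α)) ≤ i := by
    have hsplit : (l : Multiset α) = ↑(l.take i) + ↑(l.drop i) := by
      rw [Multiset.coe_add, List.take_append_drop]
    rw [hsplit, Multiset.filter_add, Multiset.card_add]
    have hz : Multiset.filter p (↑(l.drop i) : Multiset α) = 0 := by
      rw [Multiset.filter_eq_nil]
      simpa using hdrop
    rw [hz, Multiset.card_zero]
    have hfle : Multiset.card (Multiset.filter p (↑(l.take i) : Multiset α)) ≤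
        Multiset.card (↑(l.take i) : Multiset α) := Multiset.card_le_card (Multiset.filter_le _ _)
    rw [Multiset.coe_card] at hfle
    have hlen : (l.take i).length ≤ i := by rw [List.length_take]; omega
    omega
  have hle : Multiset.filter p (l' : Multiset α) ≤ Multiset.filter p (l : Multiset α) := by
    rw [Multiset.le_iff_count]
    intro x
    by_cases hx : p x
    · rw [Multiset.count_filter_of_pos hx, Multiset.count_filter_of_pos hx]
      by_cases hm : x ∈ l'
      · have hxl : x ∈ l := by
          by_contra hnl
          exact (hc x hm hnl).1 (by rcases hx with h | h; exact h; exact absurd h (hc x hm hnl).2) |>.elim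
        calc Multiset.count x (l' : Multiset α) ≤ 1 := hcount x (hpl x hx)
          _ ≤ Multiset.count x (l : Multiset α) := Multiset.one_le_count_iff_mem.mpr (by simpa using hxl)
      · rw [Multiset.count_eq_zero_of_notMem (by simpa using hm)]
        omega
    · rw [Multiset.count_filter_of_neg hx, Multiset.count_filter_of_neg hx]
  have := Multiset.card_le_card hle
  omega

theorem polygamous_man_optimal_is_woman_pessimal
    {M W : Type*} [Fintype M] [Fintype W] [DecidableEq M] [DecidableEq W]
    (qM : M → ℕ) (qW : W → ℕ) (hqM : ∀ m, 1 ≤ qM m) (hqW : ∀ w, 1 ≤ qW w)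
    (prefM : M → Option W → Option W → Prop)
    (prefW : W → Option M → Option M → Prop)
    (hM : ∀ m, IsStrictTotalOrder (Option W) (prefM m))
    (hW : ∀ w, IsStrictTotalOrder (Option M) (prefW w))
    (μ : Finset (M × W))
    (hval : PolyValid qM qW μ)
    (hstab : PolyStable qM qW prefM prefW μ)
    -- man-optimality of μ
    (hopt : ∀ μ' : Finset (M × W),
      PolyValid qM qW μ' → PolyStable qM qW prefM prefW μ' →
      MenDominate qM prefM μ μ') :
    -- woman-pessimality of μ
    ∀ μ' : Finset (M × W),
      PolyValid qM qW μ' → PolyStable qM qW prefM prefW μ' →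
      ∀ (w : W) (l l' : List (Option M)),
        (l : Multiset (Option M)) = paddedAssignmentW μ' qW w →
        l.Pairwise (fun a b => a = b ∨ prefW w a b) →
        (l' : Multiset (Option M)) = paddedAssignmentW μ qW w →
        l'.Pairwise (fun a b => a = b ∨ prefW w a b) →
        ∀ (i : ℕ) (h : i < l.length) (h' : i < l'.length),
          l.get ⟨i, h⟩ = l'.get ⟨i, h'⟩ ∨ prefW w (l.get ⟨i, h⟩) (l'.get ⟨i, h'⟩) := by
  classical
  intro μ' hval' hstab' w l l' hlc hls hl'c hl's i h h'
  by_contra hcon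
  push_neg at hcon
  obtain ⟨hne, hnp⟩ := hcon
  have ht : prefW w (l'.get ⟨i, h'⟩) (l.get ⟨i, h⟩) := by
    rcases (by haveI := hW w; exact (trichotomous _ _ : prefW w (l.get ⟨i, h⟩) (l'.get ⟨i, h'⟩) ∨ l.get ⟨i, h⟩ = l'.get ⟨i, h'⟩ ∨ prefW w (l'.get ⟨i, h'⟩) (l.get ⟨i, h⟩))) with hr | he | hr
    · exact absurd hr hnp
    · exact absurd he hne
    · exact hr
  set t := l'.get ⟨i, h'⟩ with hts
  set li := l.get ⟨i, h⟩ with hlis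
  have hliMem : li ∈ paddedAssignmentW μ' qW w := by
    rw [← hlc]; exact Multiset.mem_coe.mpr (List.get_mem _ _)
  have hnoneli : ¬ prefW w none li := by
    intro hcontra
    rcases Option.eq_none_or_eq_some li with hli | ⟨m'', hli⟩
    · rw [hli] at hcontra; exact (hW w).irrefl _ hcontra
    · rw [hli] at hliMem hcontra
      have hm : (m'', w) ∈ μ' := mem_paddedW_some.mp hliMem
      exact (hW w).irrefl none ((hW w).trans _ _ _ hcontra ((hstab'.1 _ hm).2))
  have hcount : ∀ x, prefW w x li → Multiset.count x (l' : Multiset (Option M)) ≤ 1 := by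
    intro x hx
    rcases Option.eq_none_or_eq_some x with hxn | ⟨m₁, hxn⟩
    · rw [hxn] at hx; exact absurd hx hnoneli
    · rw [hxn, hl'c]; exact count_paddedW_some m₁
  obtain ⟨x, hxl', hxnl, hxt⟩ := sorted_pigeonhole
    (fun a b c hab hbc => (hW w).trans a b c hab hbc) (hW w).irrefl hls hl's h h' ht hcount
  have hxli : prefW w x li := by
    rcases hxt with he | hr
    · rw [he]; exact ht
    · exact (hW w).trans _ _ _ hr ht
  obtain ⟨m, rfl⟩ : ∃ m, x = some m := by
    rcases Option.eq_none_or_eq_some x with hxn | ⟨m, hxn⟩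
    · rw [hxn] at hxli; exact absurd hxli hnoneli
    · exact ⟨m, hxn⟩
  have hmμ : (m, w) ∈ μ := by
    have hx2 : (some m : Option M) ∈ paddedAssignmentW μ qW w := by
      rw [← hl'c]; exact Multiset.mem_coe.mpr hxl'
    exact mem_paddedW_some.mp hx2
  have hmnμ' : (m, w) ∉ μ' := by
    intro hc
    have : (some m : Option M) ∈ paddedAssignmentW μ' qW w := mem_paddedW_some.mpr hc
    rw [← hlc] at this
    exact hxnl (Multiset.mem_coe.mp this)
  -- woman side of the blocking pair
  have hwside : (∃ m', (m', w) ∈ μ' ∧ prefW w (some m) (some m')) ∨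
      ((μ'.filter fun p => p.2 = w).card < qW w ∧ prefW w (some m) none) := by
    rcases Option.eq_none_or_eq_some li with hli | ⟨m'', hli⟩
    · rw [hli] at hliMem hxli
      exact Or.inr ⟨none_mem_paddedW hliMem, hxli⟩
    · rw [hli] at hliMem hxli
      exact Or.inl ⟨m'', mem_paddedW_some.mp hliMem, hxli⟩
  -- man side: use man-optimality
  letI : DecidableRel (fun a b : Option W => a = b ∨ prefM m a b) := Classical.decRel _
  haveI : IsTrans (Option W) (fun a b => a = b ∨ prefM m a b) := by
    constructor
    intro a b c hab hbc
    rcases hab with rfl | h1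
    · exact hbc
    rcases hbc with rfl | h2
    · exact Or.inr h1
    · exact Or.inr ((hM m).trans _ _ _ h1 h2)
  haveI : IsAntisymm (Option W) (fun a b => a = b ∨ prefM m a b) := by
    constructor
    intro a b hab hba
    rcases hab with rfl | h1
    · rfl
    rcases hba with rfl | h2
    · rfl
    · exact absurd ((hM m).trans _ _ _ h1 h2) ((hM m).irrefl a)
  haveI : IsTotal (Option W) (fun a b => a = b ∨ prefM m a b) := by
    constructor
    intro a b
    rcases (by haveI := hM m; exact (trichotomous _ _ : prefM m a b ∨ a = b ∨ prefM m b a)) with h1 | rfl | h1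
    · exact Or.inl (Or.inr h1)
    · exact Or.inl (Or.inl rfl)
    · exact Or.inr (Or.inr h1)
  set lm := (paddedAssignmentM μ qM m).sort (fun a b => a = b ∨ prefM m a b) with hlmdef
  set lm' := (paddedAssignmentM μ' qM m).sort (fun a b => a = b ∨ prefM m a b) with hlm'def
  have hlm : (lm : Multiset (Option W)) = paddedAssignmentM μ qM m := Multiset.sort_eq _ _
  have hlm' : (lm' : Multiset (Option W)) = paddedAssignmentM μ' qM m := Multiset.sort_eq _ _
  have hlmlen : lm.length = qM m := by
    have := card_paddedM (μ := μ) (qM := qM) (m := m) (hval.1 m)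
    rw [← hlm, Multiset.coe_card] at this
    exact this
  have hlm'len : lm'.length = qM m := by
    have := card_paddedM (μ := μ') (qM := qM) (m := m) (hval'.1 m)
    rw [← hlm', Multiset.coe_card] at this
    exact this
  have hwmem : (some w : Option W) ∈ lm := by
    have : (some w : Option W) ∈ paddedAssignmentM μ qM m := mem_paddedM_some.mpr hmμ
    rw [← hlm] at this
    exact Multiset.mem_coe.mp this
  obtain ⟨n, hn⟩ := List.mem_iff_get.mp hwmem
  have hj' : (n : ℕ) < lm'.length := by
    have := n.2
    omega
  have hd := hopt μ' hval' hstab' m lm lm' hlm (Multiset.pairwise_sort _ _) hlm'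
    (Multiset.pairwise_sort _ _) (n : ℕ) n.2 hj'
  have hget : lm.get ⟨(n : ℕ), n.2⟩ = some w := hn
  set y := lm'.get ⟨(n : ℕ), hj'⟩ with hydef
  have hyMem : y ∈ paddedAssignmentM μ' qM m := by
    rw [← hlm']; exact Multiset.mem_coe.mpr (List.get_mem _ _)
  rw [hget] at hd
  rcases hd with he | hpref
  · rw [← he] at hyMem
    exact hmnμ' (mem_paddedM_some.mp hyMem)
  · have hmside : (∃ w', (m, w') ∈ μ' ∧ prefM m (some w) (some w')) ∨
        ((μ'.filter fun p => p.1 = m).card < qM m ∧ prefM m (some w) none) := by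
      rcases Option.eq_none_or_eq_some y with hy | ⟨w', hy⟩
      · rw [hy] at hyMem hpref
        exact Or.inr ⟨none_mem_paddedM hyMem, hpref⟩
      · rw [hy] at hyMem hpref
        exact Or.inl ⟨w', mem_paddedM_some.mp hyMem, hpref⟩
    exact hstab'.2 ⟨m, w, hmnμ', hmside, hwside⟩
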